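/- arXiv:2510.20311 — 3 statements merged into one kernel-verified Lean document; each statement's English description precedes it below -/
import Mathlib

section
/- For an ensemble E = {(η_i, ρ_i)}_{i=1}^n, the maximum success probability p_G(E) over all maximum-confidence measurements satisfies p_G(E) ≥ λ/n, where λ is the smallest nonzero eigenvalue of ρ₀ = Σ_i η_i ρ_i. -/
set_option maxHeartbeats 1000000

open Matrix BigOperators
open scoped ComplexOrder InnerProductSpace

section Helpers

variable {m : Type*} [Fintype m]

lemma herm_dot_im_zero {M : Matrix m m ℂ} (hM : M.IsHermitian) (x : m → ℂ) :
    (star x ⬝ᵥ M *ᵥ x).im = 0 := by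
  have h : star (star x ⬝ᵥ M *ᵥ x) = star x ⬝ᵥ M *ᵥ x := by
    calc star (star x ⬝ᵥ M *ᵥ x) = star (star (star (M *ᵥ x) ⬝ᵥ x)) := by rw [star_dotProduct]
      _ = star (M *ᵥ x) ⬝ᵥ x := star_star _
      _ = star x ᵥ* Mᴴ ⬝ᵥ x := by rw [star_mulVec]
      _ = star x ⬝ᵥ Mᴴ *ᵥ x := (dotProduct_mulVec _ _ _).symm
      _ = star x ⬝ᵥ M *ᵥ x := by rw [hM.eq]
  have := congrArg Complex.im h.symm
  simp only [Complex.star_def, Complex.conj_im] at this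
  linarith

lemma posSemidef_of_re {M : Matrix m m ℂ} (hM : M.IsHermitian)
    (h : ∀ x, 0 ≤ (star x ⬝ᵥ M *ᵥ x).re) : M.PosSemidef := by
  refine Matrix.PosSemidef.of_dotProduct_mulVec_nonneg hM fun x => ?_
  rw [Complex.le_def]
  exact ⟨by simpa using h x, by simpa using (herm_dot_im_zero hM x).symm⟩

lemma psd_re_nonneg {M : Matrix m m ℂ} (hM : M.PosSemidef) (x : m → ℂ) :
    0 ≤ (star x ⬝ᵥ M *ᵥ x).re := by
  simpa using (Complex.le_def.mp (hM.dotProduct_mulVec_nonneg x)).1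

lemma psd_smul {M : Matrix m m ℂ} (hM : M.PosSemidef) {c : ℝ} (hc : 0 ≤ c) :
    ((c : ℂ) • M).PosSemidef := by
  refine Matrix.PosSemidef.of_dotProduct_mulVec_nonneg ?_ fun x => ?_
  · unfold Matrix.IsHermitian
    rw [conjTranspose_smul, hM.1.eq]
    simp
  · rw [smul_mulVec, dotProduct_smul]
    have := hM.dotProduct_mulVec_nonneg x
    have hre := (Complex.le_def.mp this).1
    have him := (Complex.le_def.mp this).2
    rw [Complex.le_def]
    constructor
    · simp only [Complex.zero_re, smul_eq_mul, Complex.mul_re, Complex.ofReal_re,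
        Complex.ofReal_im, zero_mul, sub_zero]
      simp only [Complex.zero_re] at hre
      positivity
    · simp only [Complex.zero_im, smul_eq_mul, Complex.mul_im, Complex.ofReal_re,
        Complex.ofReal_im, zero_mul, add_zero]
      simp only [Complex.zero_im] at him
      rw [← him]; ring

lemma psd_vecMulVec (v : m → ℂ) : (vecMulVec v (star v)).PosSemidef := by
  rw [vecMulVec_eq Unit]
  have := posSemidef_conjTranspose_mul_self (replicateRow Unit (star v))
  rwa [conjTranspose_replicateRow, star_star] at this

omit [Fintype m] in
lemma vecMulVec_herm (v : m → ℂ) : (vecMulVec v (star v)).IsHermitian := by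
  ext i j
  simp [Matrix.conjTranspose_apply, vecMulVec_apply, mul_comm]

lemma trace_mul_vecMulVec (P : Matrix m m ℂ) (v : m → ℂ) :
    (P * vecMulVec v (star v)).trace = star v ⬝ᵥ (P *ᵥ v) := by
  simp only [Matrix.trace, Matrix.diag, Matrix.mul_apply, vecMulVec_apply, dotProduct, mulVec,
    dotProduct, Finset.mul_sum, Pi.star_apply]
  refine Finset.sum_congr rfl fun i _ => Finset.sum_congr rfl fun j _ => by ring

lemma dot_self_eq (x : m → ℂ) :
    star x ⬝ᵥ x = ((∑ j, Complex.normSq (x j) : ℝ) : ℂ) := by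
  push_cast
  simp only [dotProduct, Pi.star_apply, Complex.star_def]
  exact Finset.sum_congr rfl fun j _ => (Complex.normSq_eq_conj_mul_self).symm ▸ rfl

lemma dot_cs (v x : m → ℂ) :
    Complex.normSq (star v ⬝ᵥ x) ≤ (star v ⬝ᵥ v).re * (star x ⬝ᵥ x).re := by
  let v' : EuclideanSpace ℂ m := (WithLp.equiv 2 (m → ℂ)).symm v
  let x' : EuclideanSpace ℂ m := (WithLp.equiv 2 (m → ℂ)).symm x
  have h1 : ⟪v', x'⟫_ℂ = star v ⬝ᵥ x := by
    rw [EuclideanSpace.inner_eq_star_dotProduct]; exact dotProduct_comm _ _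
  have h2 : ⟪v', v'⟫_ℂ = star v ⬝ᵥ v := by
    rw [EuclideanSpace.inner_eq_star_dotProduct]; exact dotProduct_comm _ _
  have h3 : ⟪x', x'⟫_ℂ = star x ⬝ᵥ x := by
    rw [EuclideanSpace.inner_eq_star_dotProduct]; exact dotProduct_comm _ _
  have hcs := norm_inner_le_norm (𝕜 := ℂ) v' x'
  have hv : RCLike.re ⟪v', v'⟫_ℂ = ‖v'‖ ^ 2 := inner_self_eq_norm_sq (𝕜 := ℂ) v'
  have hx : RCLike.re ⟪x', x'⟫_ℂ = ‖x'‖ ^ 2 := inner_self_eq_norm_sq (𝕜 := ℂ) x'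
  have : Complex.normSq (star v ⬝ᵥ x) = ‖⟪v', x'⟫_ℂ‖ ^ 2 := by
    rw [h1, Complex.normSq_eq_norm_sq]
  rw [this, ← h2, ← h3]
  have : RCLike.re ⟪v', v'⟫_ℂ * RCLike.re ⟪x', x'⟫_ℂ = (‖v'‖ * ‖x'‖) ^ 2 := by
    rw [hv, hx]; ring
  rw [show ((⟪v', v'⟫_ℂ).re : ℝ) = RCLike.re ⟪v', v'⟫_ℂ from rfl,
     show ((⟪x', x'⟫_ℂ).re : ℝ) = RCLike.re ⟪x', x'⟫_ℂ from rfl, this]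
  exact pow_le_pow_left₀ (norm_nonneg _) hcs 2

lemma dot_vecMulVec (v x : m → ℂ) :
    star x ⬝ᵥ (vecMulVec v (star v)) *ᵥ x = Complex.normSq (star v ⬝ᵥ x) := by
  have h1 : (vecMulVec v (star v)) *ᵥ x = (star v ⬝ᵥ x) • v := by
    ext i
    simp [mulVec, vecMulVec_apply, dotProduct, Finset.mul_sum, mul_comm, mul_assoc, mul_left_comm]
  rw [h1, dotProduct_smul]
  have h2 : star x ⬝ᵥ v = star (star v ⬝ᵥ x) := by
    rw [star_dotProduct]
  rw [h2]
  simp [smul_eq_mul, Complex.normSq_eq_conj_mul_self, mul_comm]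

lemma sum_subtype_vanish {α : Type*} [Fintype α] {M : Type*} [AddCommMonoid M]
    {p : α → Prop} [DecidablePred p] (f : α → M) (h : ∀ j, ¬ p j → f j = 0) :
    ∑ s : Subtype p, f s.val = ∑ j, f j := by
  rw [← Finset.sum_subtype (Finset.univ.filter p) (by simp) f]
  exact Finset.sum_filter_of_ne fun x _ hfx => by
    by_contra hp; exact hfx (h x hp)

variable [DecidableEq m]

lemma sub_smul_one_psd {M : Matrix m m ℂ} (hM : M.IsHermitian) {δ : ℝ}
    (hδ : ∀ i, δ ≤ hM.eigenvalues i) : (M - (δ : ℂ) • 1).PosSemidef := by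
  set U : Matrix m m ℂ := (hM.eigenvectorUnitary : Matrix m m ℂ) with hU
  have hUU : U * star U = 1 := (Matrix.mem_unitaryGroup_iff).mp hM.eigenvectorUnitary.2
  have hD : (diagonal (fun i => ((hM.eigenvalues i - δ : ℝ) : ℂ))).PosSemidef := by
    refine Matrix.PosSemidef.diagonal fun i => ?_
    rw [Complex.le_def]
    constructor
    · simpa using sub_nonneg.mpr (hδ i)
    · simp
  have key : M - (δ : ℂ) • 1 =
      U * diagonal (fun i => ((hM.eigenvalues i - δ : ℝ) : ℂ)) * star U := by
    have hdiag : diagonal (fun i => ((hM.eigenvalues i - δ : ℝ) : ℂ)) =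
        diagonal (RCLike.ofReal ∘ hM.eigenvalues) - (δ : ℂ) • 1 := by
      ext i j
      by_cases h : i = j <;>
        simp [h, Matrix.diagonal_apply, Matrix.one_apply, Complex.ofReal_sub]
    have hs : M = U * diagonal (RCLike.ofReal ∘ hM.eigenvalues) * star U := hM.spectral_theorem
    rw [hdiag, Matrix.mul_sub, Matrix.sub_mul, ← hs]
    congr 1
    rw [Matrix.mul_smul, Matrix.smul_mul, mul_one, hUU]
  rw [key]
  exact hD.mul_mul_conjTranspose_same U

lemma dot_single (M : Matrix m m ℂ) (k : m) :
    star (Pi.single k 1) ⬝ᵥ M *ᵥ (Pi.single k 1) = M k k := by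
  rw [mulVec_single]
  simp [dotProduct, Pi.single_apply]

lemma dot_diag (μ : m → ℝ) (c : m → ℂ) :
    (star c ⬝ᵥ (diagonal (fun j => ((μ j : ℝ) : ℂ))) *ᵥ c).re
      = ∑ j, μ j * Complex.normSq (c j) := by
  have h1 : star c ⬝ᵥ (diagonal (fun j => ((μ j : ℝ) : ℂ))) *ᵥ c
      = ∑ j, ((μ j : ℂ) * (star (c j) * c j)) := by
    simp [dotProduct, mulVec_diagonal]
    exact Finset.sum_congr rfl fun j _ => by ring
  rw [h1, Complex.re_sum]
  refine Finset.sum_congr rfl fun j _ => ?_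
  rw [Complex.star_def, ← Complex.normSq_eq_conj_mul_self]
  simp [Complex.mul_re]

lemma dot_conj {M U : Matrix m m ℂ} (hU : U * star U = 1) (x : m → ℂ) :
    star x ⬝ᵥ M *ᵥ x = star (star U *ᵥ x) ⬝ᵥ ((star U * M * U) *ᵥ (star U *ᵥ x)) := by
  have key : ∀ (w : m → ℂ) (z : m → ℂ), star z ⬝ᵥ (star U *ᵥ w) = star (U *ᵥ z) ⬝ᵥ w := by
    intro w z
    rw [dotProduct_mulVec, Matrix.star_eq_conjTranspose, ← star_mulVec]
  rw [mulVec_mulVec, Matrix.mul_assoc (star U * M) U (star U), hU, Matrix.mul_one,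
    ← mulVec_mulVec, key, mulVec_mulVec, hU, one_mulVec]

omit [DecidableEq m] in
lemma psd_sum {ι : Type*} (s : Finset ι) (f : ι → Matrix m m ℂ)
    (h : ∀ i ∈ s, (f i).PosSemidef) : (∑ i ∈ s, f i).PosSemidef := by
  classical
  induction s using Finset.induction_on with
  | empty => simpa using Matrix.PosSemidef.zero
  | insert a s hx ih =>
    rw [Finset.sum_insert hx]
    exact (h _ (Finset.mem_insert_self _ _)).add
      (ih fun i hi => h i (Finset.mem_insert_of_mem hi))

lemma psd_one_sub {v : m → ℂ} {ν : ℝ} (hν : 0 < ν) (hvv : (star v ⬝ᵥ v) = (ν : ℂ)) :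
    ((1 : Matrix m m ℂ) - ((ν⁻¹ : ℝ) : ℂ) • vecMulVec v (star v)).PosSemidef := by
  apply posSemidef_of_re
  · unfold Matrix.IsHermitian
    rw [conjTranspose_sub, conjTranspose_smul, (vecMulVec_herm v).eq, conjTranspose_one]
    simp
  · intro x
    have hexp : star x ⬝ᵥ ((1 : Matrix m m ℂ) - ((ν⁻¹ : ℝ) : ℂ) • vecMulVec v (star v)) *ᵥ x
        = star x ⬝ᵥ x - ((ν⁻¹ : ℝ) : ℂ) * (Complex.normSq (star v ⬝ᵥ x) : ℂ) := by
      rw [Matrix.sub_mulVec, dotProduct_sub, one_mulVec, smul_mulVec, dotProduct_smul,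
        dot_vecMulVec, smul_eq_mul]
    rw [hexp]
    have hcs := dot_cs v x
    rw [hvv] at hcs
    simp only [Complex.ofReal_re] at hcs
    have hxre : 0 ≤ (star x ⬝ᵥ x).re := by
      rw [dot_self_eq, Complex.ofReal_re]
      exact Finset.sum_nonneg fun j _ => Complex.normSq_nonneg (x j)
    have h2 : ν⁻¹ * Complex.normSq (star v ⬝ᵥ x) ≤ (star x ⬝ᵥ x).re := by
      rw [inv_mul_le_iff₀ hν]
      exact hcs
    simp only [Complex.sub_re, Complex.mul_re, Complex.ofReal_re, Complex.ofReal_im,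
      zero_mul, sub_zero]
    linarith

end Helpers

/-- p_G(E) ≥ λ/n for λ the smallest nonzero eigenvalue of ρ₀;
i.e., there is a maximum-confidence measurement whose success probability is at least λ/n. -/
theorem stmt_5 {d n : ℕ} (hd : 0 < d) (hn : 0 < n)
    (η : Fin n → ℝ) (ρ : Fin n → Matrix (Fin d) (Fin d) ℂ)
    (hη : ∀ i, 0 < η i) (hηsum : ∑ i, η i = 1)
    (hρ : ∀ i, (ρ i).PosSemidef) (hρtr : ∀ i, (ρ i).trace = 1)
    (ρ₀ : Matrix (Fin d) (Fin d) ℂ) (hρ₀ : ρ₀ = ∑ i, (η i : ℂ) • ρ i)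
    (C : Fin n → ℝ)
    (hC : ∀ i, IsLeast { q : ℝ | ((q : ℂ) • ρ₀ - (η i : ℂ) • ρ i).PosSemidef } (C i))
    (hρ₀herm : ρ₀.IsHermitian) (lam : ℝ)
    (hlam : IsLeast { μ : ℝ | μ ≠ 0 ∧ ∃ j, hρ₀herm.eigenvalues j = μ } lam) :
    ∃ M : Option (Fin n) → Matrix (Fin d) (Fin d) ℂ,
      (∀ j, (M j).PosSemidef) ∧ ∑ j, M j = 1 ∧
      (∀ i, (((C i : ℂ) • ρ₀ - (η i : ℂ) • ρ i) * M (some i)).trace = 0) ∧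
      lam / n ≤ ∑ i, η i * (ρ i * M (some i)).trace.re := by
  classical
  obtain ⟨hlamne, j₀, hj₀⟩ := hlam.1
  -- basic positivity facts
  have hρ₀psd : ρ₀.PosSemidef := by
    rw [hρ₀]; exact psd_sum _ _ fun i _ => psd_smul (hρ i) (hη i).le
  have hlampos : 0 < lam := by
    have h0 : 0 ≤ hρ₀herm.eigenvalues j₀ := hρ₀psd.eigenvalues_nonneg j₀
    rw [hj₀] at h0
    exact lt_of_le_of_ne h0 (Ne.symm hlamne)
  -- choose the index with maximal prior
  obtain ⟨i₀, -, hi₀max⟩ := Finset.exists_max_image Finset.univ η ⟨⟨0, hn⟩, Finset.mem_univ _⟩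
  have hnpos : (0 : ℝ) < n := by exact_mod_cast hn
  have hηi₀ : 1 ≤ (n : ℝ) * η i₀ := by
    calc (1 : ℝ) = ∑ i, η i := hηsum.symm
      _ ≤ ∑ _i : Fin n, η i₀ := Finset.sum_le_sum fun i _ => hi₀max i (Finset.mem_univ i)
      _ = (n : ℝ) * η i₀ := by simp [Finset.sum_const, nsmul_eq_mul]
  have htrρ₀ : ρ₀.trace = 1 := by
    rw [hρ₀, trace_sum]
    simp only [trace_smul, hρtr, smul_eq_mul, mul_one]
    rw [← Complex.ofReal_sum]
    · rw [hηsum]; norm_num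
  set A := (C i₀ : ℂ) • ρ₀ - (η i₀ : ℂ) • ρ i₀ with hAdef
  have hA : A.PosSemidef := (hC i₀).1
  have hdiagA : ∀ (P : Matrix (Fin d) (Fin d) ℂ), P.PosSemidef → ∀ k, 0 ≤ (P k k).re := by
    intro P hP k
    have := psd_re_nonneg hP (Pi.single k 1)
    rwa [dot_single] at this
  have hCi₀ : η i₀ ≤ C i₀ := by
    have htr : A.trace = ((C i₀ - η i₀ : ℝ) : ℂ) := by
      rw [hAdef, trace_sub, trace_smul, htrρ₀, trace_smul, hρtr]
      push_cast
      simp [smul_eq_mul]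
    have h0 : 0 ≤ A.trace.re := by
      rw [Matrix.trace, Complex.re_sum]
      exact Finset.sum_nonneg fun k _ => hdiagA A hA k
    rw [htr] at h0
    simpa using h0
  have hCpos : 0 < C i₀ := lt_of_lt_of_le (hη i₀) hCi₀
  -- eigen-decomposition of ρ₀
  set U : Matrix (Fin d) (Fin d) ℂ := (hρ₀herm.eigenvectorUnitary : Matrix (Fin d) (Fin d) ℂ)
    with hUdef
  have hU1 : U * star U = 1 := (Matrix.mem_unitaryGroup_iff).mp hρ₀herm.eigenvectorUnitary.2
  have hU2 : star U * U = 1 := (Matrix.mem_unitaryGroup_iff').mp hρ₀herm.eigenvectorUnitary.2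
  set μ : Fin d → ℝ := hρ₀herm.eigenvalues with hμdef
  set D : Matrix (Fin d) (Fin d) ℂ := diagonal (fun j => ((μ j : ℝ) : ℂ)) with hDdef
  have hdiag : star U * ρ₀ * U = D := by
    have hs : ρ₀ = U * D * star U := hρ₀herm.spectral_theorem
    calc star U * ρ₀ * U = star U * (U * D * star U) * U := congrArg (fun X => star U * X * U) hs
      _ = D := by
        simp only [← Matrix.mul_assoc, hU2, Matrix.one_mul]
        rw [Matrix.mul_assoc, hU2, Matrix.mul_one]
  set B := star U * A * U with hBdef
  have hBpsd : B.PosSemidef := by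
    have := hA.conjTranspose_mul_mul_same U
    rwa [← Matrix.star_eq_conjTranspose] at this
  set R := star U * ((η i₀ : ℂ) • ρ i₀) * U with hRdef
  have hRpsd : R.PosSemidef := by
    have := (psd_smul (hρ i₀) (hη i₀).le).conjTranspose_mul_mul_same U
    rwa [← Matrix.star_eq_conjTranspose] at this
  have hBeq : B = (C i₀ : ℂ) • D - R := by
    rw [hBdef, hAdef, hRdef, Matrix.mul_sub, Matrix.sub_mul]
    congr 1
    rw [Matrix.mul_smul, Matrix.smul_mul, hdiag]
  have hBcol : ∀ k, μ k = 0 → ∀ j, B j k = 0 := by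
    intro k hk
    have hDkk : D k k = 0 := by rw [hDdef]; simp [hk]
    have h1 : (B k k).re ≤ 0 := by
      have hBkk : B k k = - R k k := by
        rw [hBeq]
        simp only [Matrix.sub_apply, Matrix.smul_apply, hDkk, smul_zero, zero_sub]
      rw [hBkk]
      have := hdiagA R hRpsd k
      simp only [Complex.neg_re]
      linarith
    have h2 : 0 ≤ (B k k).re := hdiagA B hBpsd k
    have h3 : (B k k).im = 0 := by
      have := herm_dot_im_zero hBpsd.1 (Pi.single k 1)
      rwa [dot_single] at this
    have hkk : B k k = 0 := Complex.ext (le_antisymm h1 h2) h3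
    have h4 : B *ᵥ Pi.single k 1 = 0 := by
      apply (hBpsd.dotProduct_mulVec_zero_iff _).mp
      rw [dot_single]; exact hkk
    intro j
    have := congrFun h4 j
    rw [mulVec_single] at this
    simpa using this
  have hBrow : ∀ k, μ k = 0 → ∀ j, B k j = 0 := by
    intro k hk j
    have : Bᴴ k j = star (B j k) := Matrix.conjTranspose_apply B j k
    rw [hBpsd.1.eq] at this
    rw [this, hBcol k hk j, star_zero]
  -- the support subtype
  have hSne : Nonempty {j : Fin d // μ j ≠ 0} := ⟨⟨j₀, by rw [hj₀]; exact hlamne⟩⟩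
  set B' : Matrix {j : Fin d // μ j ≠ 0} {j : Fin d // μ j ≠ 0} ℂ :=
    B.submatrix Subtype.val Subtype.val with hB'def
  have hB'psd : B'.PosSemidef := hBpsd.submatrix Subtype.val
  -- core claim: B has a kernel vector supported on the support of ρ₀
  have hkernel : ∃ c : Fin d → ℂ, c ≠ 0 ∧ (∀ j, μ j = 0 → c j = 0) ∧ B *ᵥ c = 0 := by
    by_cases hPD : B'.PosDef
    · exfalso
      have hermB' := hB'psd.1
      obtain ⟨smin, -, hsmin⟩ := Finset.exists_min_image Finset.univ hermB'.eigenvalues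
        ⟨hSne.some, Finset.mem_univ _⟩
      set δ := hermB'.eigenvalues smin with hδdef
      have hδpos : 0 < δ := hPD.eigenvalues_pos smin
      have hBdel : (B' - (δ : ℂ) • 1).PosSemidef :=
        sub_smul_one_psd hermB' (fun i => hsmin i (Finset.mem_univ i))
      obtain ⟨jm, -, hjm⟩ := Finset.exists_max_image Finset.univ μ ⟨j₀, Finset.mem_univ _⟩
      have hμm : 0 < μ jm := lt_of_lt_of_le hlampos (hj₀ ▸ hjm j₀ (Finset.mem_univ _))
      set ε := δ / μ jm with hεdef
      have hεpos : 0 < ε := div_pos hδpos hμm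
      have hstep : (((C i₀ - ε : ℝ) : ℂ) • ρ₀ - (η i₀ : ℂ) • ρ i₀).PosSemidef := by
        have heq : ((C i₀ - ε : ℝ) : ℂ) • ρ₀ - (η i₀ : ℂ) • ρ i₀ = A - (ε : ℂ) • ρ₀ := by
          rw [hAdef]; push_cast; module
        rw [heq]
        apply posSemidef_of_re
        · exact hA.1.sub (psd_smul hρ₀psd hεpos.le).1
        intro x
        have hconj : star U * (A - (ε : ℂ) • ρ₀) * U = B - (ε : ℂ) • D := by
          rw [Matrix.mul_sub, Matrix.sub_mul, ← hBdef]
          congr 1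
          rw [Matrix.mul_smul, Matrix.smul_mul, hdiag]
        rw [dot_conj hU1 x, hconj]
        set c := star U *ᵥ x with hcdef
        set w : {j : Fin d // μ j ≠ 0} → ℂ := fun s => c s.val with hwdef
        have hexp : star c ⬝ᵥ (B - (ε : ℂ) • D) *ᵥ c
            = star c ⬝ᵥ B *ᵥ c - (ε : ℂ) * (star c ⬝ᵥ D *ᵥ c) := by
          rw [Matrix.sub_mulVec, dotProduct_sub, smul_mulVec, dotProduct_smul, smul_eq_mul]
        have h3 : star c ⬝ᵥ B *ᵥ c = star w ⬝ᵥ B' *ᵥ w := by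
          have hterm : ∀ j, ¬ μ j ≠ 0 → star (c j) * (B *ᵥ c) j = 0 := by
            intro j hj
            have : (B *ᵥ c) j = 0 := by
              simp only [mulVec, dotProduct]
              exact Finset.sum_eq_zero fun k _ => by rw [hBrow j (not_not.mp hj) k, zero_mul]
            rw [this, mul_zero]
          calc star c ⬝ᵥ B *ᵥ c = ∑ j, star (c j) * (B *ᵥ c) j := rfl
            _ = ∑ s : {j : Fin d // μ j ≠ 0}, star (c s.val) * (B *ᵥ c) s.val :=
                (sum_subtype_vanish (fun j => star (c j) * (B *ᵥ c) j) hterm).symm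
            _ = star w ⬝ᵥ B' *ᵥ w := by
                refine Finset.sum_congr rfl fun s _ => ?_
                congr 1
                simp only [mulVec, dotProduct, hB'def, submatrix_apply]
                exact (sum_subtype_vanish (fun k => B s.val k * c k)
                  (fun k hk => by
                    show B s.val k * c k = 0
                    rw [hBcol k (not_not.mp hk) s.val, zero_mul])).symm
        have h3re := congrArg Complex.re h3
        have h4 := dot_diag μ c
        have h5 : δ * ∑ s, Complex.normSq (w s) ≤ (star w ⬝ᵥ B' *ᵥ w).re := by
          have h0 := psd_re_nonneg hBdel w
          have hexp2 : star w ⬝ᵥ (B' - (δ : ℂ) • 1) *ᵥ w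
              = star w ⬝ᵥ B' *ᵥ w - (δ : ℂ) * (star w ⬝ᵥ w) := by
            rw [Matrix.sub_mulVec, dotProduct_sub, smul_mulVec, one_mulVec,
              dotProduct_smul, smul_eq_mul]
          rw [hexp2, dot_self_eq] at h0
          simp only [Complex.sub_re, Complex.re_ofReal_mul, Complex.ofReal_re] at h0
          linarith
        have h6 : ∑ j, μ j * Complex.normSq (c j) ≤ μ jm * ∑ s, Complex.normSq (w s) := by
          have he : ∑ j, μ j * Complex.normSq (c j)
              = ∑ s : {j : Fin d // μ j ≠ 0}, μ s.val * Complex.normSq (c s.val) :=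
            (sum_subtype_vanish (fun j => μ j * Complex.normSq (c j))
              (fun j hj => by
                show μ j * Complex.normSq (c j) = 0
                rw [not_not.mp hj, zero_mul])).symm
          rw [he, Finset.mul_sum]
          exact Finset.sum_le_sum fun s _ =>
            mul_le_mul_of_nonneg_right (hjm s.val (Finset.mem_univ _)) (Complex.normSq_nonneg _)
        have h7 := mul_le_mul_of_nonneg_left h6 hεpos.le
        have hεμ : ε * μ jm = δ := div_mul_cancel₀ δ hμm.ne'
        have h8 : ε * (μ jm * ∑ s, Complex.normSq (w s)) = δ * ∑ s, Complex.normSq (w s) := by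
          rw [← hεμ]; ring
        rw [hexp]
        simp only [Complex.sub_re, Complex.re_ofReal_mul]
        rw [h4]
        linarith [h5, h3re, h7, h8]
      have hle := (hC i₀).2 hstep
      linarith
    · have hermB' := hB'psd.1
      rw [Matrix.posDef_iff_dotProduct_mulVec] at hPD
      push_neg at hPD
      obtain ⟨w, hwne, hwle⟩ := hPD hermB'
      have hge := hB'psd.dotProduct_mulVec_nonneg w
      have hz : star w ⬝ᵥ B' *ᵥ w = 0 := by
        rcases lt_or_eq_of_le hge with h | h
        · exact absurd h hwle
        · exact h.symm
      have hker : B' *ᵥ w = 0 := (hB'psd.dotProduct_mulVec_zero_iff w).mp hz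
      refine ⟨fun j => if h : μ j ≠ 0 then w ⟨j, h⟩ else 0, ?_, ?_, ?_⟩
      · intro hc
        obtain ⟨s, hs⟩ := Function.ne_iff.mp hwne
        have h1 := congrFun hc s.val
        simp only [Pi.zero_apply, dif_pos s.prop, Subtype.eta] at h1
        exact hs h1
      · intro j hj
        simp [hj]
      · funext j
        by_cases hj : μ j = 0
        · simp only [mulVec, dotProduct, Pi.zero_apply]
          exact Finset.sum_eq_zero fun k _ => by rw [hBrow j hj k, zero_mul]
        · have heq : (B *ᵥ (fun j => if h : μ j ≠ 0 then w ⟨j, h⟩ else 0)) j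
              = (B' *ᵥ w) ⟨j, hj⟩ := by
            simp only [mulVec, dotProduct, hB'def, submatrix_apply]
            refine (sum_subtype_vanish (p := fun k => μ k ≠ 0)
              (fun k => B j k * (if h : μ k ≠ 0 then w ⟨k, h⟩ else 0)) ?_).symm.trans ?_
            · intro k hk
              show B j k * (if h : μ k ≠ 0 then w ⟨k, h⟩ else 0) = 0
              rw [dif_neg hk, mul_zero]
            · refine Finset.sum_congr rfl fun s _ => ?_
              show B j s.val * (if h : μ s.val ≠ 0 then w ⟨s.val, h⟩ else 0) = _
              rw [dif_pos s.prop, Subtype.eta]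
          rw [heq, hker]
          rfl
  obtain ⟨c, hcne, hc0, hBc⟩ := hkernel
  set v := U *ᵥ c with hvdef
  have hAv : A *ᵥ v = 0 := by
    have hA' : U * B * star U = A := by
      rw [hBdef]
      simp only [← Matrix.mul_assoc]
      rw [hU1, one_mul, Matrix.mul_assoc, hU1, mul_one]
    rw [hvdef, mulVec_mulVec, ← hA', Matrix.mul_assoc (U * B) (star U) U, hU2,
      Matrix.mul_one, ← mulVec_mulVec, hBc, mulVec_zero]
  set ν : ℝ := ∑ j, Complex.normSq (c j) with hνdef
  have hνpos : 0 < ν := by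
    obtain ⟨j, hj⟩ := Function.ne_iff.mp hcne
    have h1 : 0 < Complex.normSq (c j) := Complex.normSq_pos.mpr hj
    exact lt_of_lt_of_le h1 (Finset.single_le_sum
      (fun k _ => Complex.normSq_nonneg (c k)) (Finset.mem_univ j))
  have hcc : star c ⬝ᵥ c = (ν : ℂ) := dot_self_eq c
  have hvv : star v ⬝ᵥ v = (ν : ℂ) := by
    calc star v ⬝ᵥ v = (star c ᵥ* Uᴴ) ⬝ᵥ (U *ᵥ c) := by rw [hvdef, star_mulVec]
      _ = star c ⬝ᵥ (Uᴴ *ᵥ (U *ᵥ c)) := (dotProduct_mulVec _ _ _).symm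
      _ = star c ⬝ᵥ ((Uᴴ * U) *ᵥ c) := by rw [mulVec_mulVec]
      _ = star c ⬝ᵥ c := by rw [← Matrix.star_eq_conjTranspose, hU2, one_mulVec]
      _ = (ν : ℂ) := hcc
  set N := ((ν⁻¹ : ℝ) : ℂ) • vecMulVec v (star v) with hNdef
  refine ⟨fun o => match o with | none => 1 - N | some i => if i = i₀ then N else 0,
    ?_, ?_, ?_, ?_⟩
  · intro o
    match o with
    | none => exact psd_one_sub hνpos hvv
    | some i =>
      by_cases hi : i = i₀
      · simpa [hi, hNdef] using psd_smul (psd_vecMulVec v) (inv_nonneg.mpr hνpos.le)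
      · simpa [hi] using (Matrix.PosSemidef.zero (n := Fin d) (R := ℂ))
  · rw [Fintype.sum_option, Finset.sum_ite_eq' Finset.univ i₀ (fun _ => N)]
    simp
  · intro i
    show (((C i : ℂ) • ρ₀ - (η i : ℂ) • ρ i) * (if i = i₀ then N else 0)).trace = 0
    by_cases hi : i = i₀
    · rw [if_pos hi, hi, ← hAdef, hNdef, Matrix.mul_smul, trace_smul, trace_mul_vecMulVec,
        hAv, dotProduct_zero, smul_zero]
    · rw [if_neg hi, Matrix.mul_zero, trace_zero]
  · show lam / (n : ℝ) ≤ ∑ i, η i * ((ρ i * (if i = i₀ then N else 0)).trace).re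
    have hsum : ∑ i, η i * ((ρ i * (if i = i₀ then N else 0)).trace).re
        = η i₀ * ((ρ i₀ * N).trace).re := by
      rw [Finset.sum_eq_single i₀]
      · rw [if_pos rfl]
      · intro i _ hne
        rw [if_neg hne, Matrix.mul_zero, trace_zero]
        simp
      · intro h
        exact absurd (Finset.mem_univ i₀) h
    rw [hsum, hNdef, Matrix.mul_smul, trace_smul, trace_mul_vecMulVec]
    have hkey : (η i₀ : ℂ) * (star v ⬝ᵥ (ρ i₀ *ᵥ v)) = (C i₀ : ℂ) * (star v ⬝ᵥ (ρ₀ *ᵥ v)) := by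
      have h0 : star v ⬝ᵥ (A *ᵥ v) = 0 := by rw [hAv, dotProduct_zero]
      rw [hAdef, Matrix.sub_mulVec, smul_mulVec, smul_mulVec, dotProduct_sub,
        dotProduct_smul, dotProduct_smul] at h0
      simp only [smul_eq_mul] at h0
      linear_combination -h0
    have hd0 : (star v ⬝ᵥ (ρ₀ *ᵥ v)).re = ∑ j, μ j * Complex.normSq (c j) := by
      have h1 := dot_conj (M := ρ₀) hU1 v
      have hc' : star U *ᵥ v = c := by rw [hvdef, mulVec_mulVec, hU2, one_mulVec]
      rw [hc', hdiag] at h1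
      rw [h1, dot_diag]
    have hd1 : lam * ν ≤ (star v ⬝ᵥ (ρ₀ *ᵥ v)).re := by
      rw [hd0, hνdef, Finset.mul_sum]
      apply Finset.sum_le_sum
      intro j _
      by_cases hj : μ j = 0
      · rw [hj, hc0 j hj]
        simp
      · exact mul_le_mul_of_nonneg_right (hlam.2 ⟨hj, j, rfl⟩) (Complex.normSq_nonneg _)
    have hre : η i₀ * (star v ⬝ᵥ (ρ i₀ *ᵥ v)).re = C i₀ * (star v ⬝ᵥ (ρ₀ *ᵥ v)).re := by
      have := congrArg Complex.re hkey
      simpa only [Complex.re_ofReal_mul] using this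
    set X := (star v ⬝ᵥ (ρ i₀ *ᵥ v)).re with hXdef
    set Y := (star v ⬝ᵥ (ρ₀ *ᵥ v)).re with hYdef
    have hgoal : (((ν⁻¹ : ℝ) : ℂ) • (star v ⬝ᵥ (ρ i₀ *ᵥ v))).re = ν⁻¹ * X := by
      rw [smul_eq_mul, Complex.re_ofReal_mul, hXdef]
    rw [hgoal]
    have e1 : η i₀ * (ν⁻¹ * X) = ν⁻¹ * (C i₀ * Y) := by rw [mul_left_comm, hre]
    have e2 : lam * C i₀ ≤ ν⁻¹ * (C i₀ * Y) := by
      have h6 : C i₀ * (lam * ν) ≤ C i₀ * Y := mul_le_mul_of_nonneg_left hd1 hCpos.le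
      calc lam * C i₀ = ν⁻¹ * (C i₀ * (lam * ν)) := by field_simp
        _ ≤ ν⁻¹ * (C i₀ * Y) := mul_le_mul_of_nonneg_left h6 (inv_nonneg.mpr hνpos.le)
    have e3 : lam / (n : ℝ) ≤ lam * η i₀ := by
      rw [div_le_iff₀ hnpos]
      nlinarith
    have e4 : lam * η i₀ ≤ lam * C i₀ := mul_le_mul_of_nonneg_left hCi₀ hlampos.le
    linarith
end

section
/- Complementary slackness: let {M_?} ∪ {M_i} be a maximum-confidence measurement of E and H ∈ H(E) (the feasible dual set). Then M achieves p_G(E) and H achieves q_G(E) if and only if Tr(M_? H) = 0 and Tr[M_i(H − η_i ρ_i)] = 0 for all i. -/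
open Matrix BigOperators
open scoped ComplexOrder

lemma psd_trace_nonneg {d : ℕ} {A : Matrix (Fin d) (Fin d) ℂ} (hA : A.PosSemidef) :
    0 ≤ A.trace := by
  rw [Matrix.trace]
  apply Finset.sum_nonneg
  intro i _
  have := hA.dotProduct_mulVec_nonneg (Pi.single i 1)
  simpa [Matrix.diag, dotProduct, Matrix.mulVec, Pi.single_apply] using this

open scoped MatrixOrder in
lemma psd_mul_trace_nonneg {d : ℕ} {A B : Matrix (Fin d) (Fin d) ℂ}
    (hA : A.PosSemidef) (hB : B.PosSemidef) : 0 ≤ (A * B).trace := by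
  have h1 : A = CFC.sqrt A * CFC.sqrt A := (CFC.sqrt_mul_sqrt_self A hA.nonneg).symm
  have h2 : (A * B).trace = (CFC.sqrt A * B * CFC.sqrt A).trace := by
    conv_lhs => rw [h1, Matrix.mul_assoc]
    exact Matrix.trace_mul_comm _ _
  rw [h2]
  have hs : (CFC.sqrt A).PosSemidef := (CFC.sqrt_nonneg A).posSemidef
  have : ((CFC.sqrt A)ᴴ * B * CFC.sqrt A).PosSemidef := hB.conjTranspose_mul_mul_same (CFC.sqrt A)
  rw [hs.1] at this
  exact psd_trace_nonneg this

lemma herm_mul_trace_real {d : ℕ} {A B : Matrix (Fin d) (Fin d) ℂ}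
    (hA : A.IsHermitian) (hB : B.IsHermitian) :
    ((A * B).trace.re : ℂ) = (A * B).trace := by
  rw [← Complex.conj_eq_iff_re]
  calc (starRingEnd ℂ) (A * B).trace = ((A * B)ᴴ).trace := by
        rw [Matrix.trace_conjTranspose]; rfl
    _ = (Bᴴ * Aᴴ).trace := by rw [Matrix.conjTranspose_mul]
    _ = (B * A).trace := by rw [hA.eq, hB.eq]
    _ = (A * B).trace := Matrix.trace_mul_comm B A


/-- complementary slackness: assuming strong duality p_G(E) = q_G(E) = p,
a maximum-confidence measurement M achieves p_G(E) and a feasible dual H achieves q_G(E)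
iff Tr(M_? H) = 0 and Tr[M_i (H − η_i ρ_i)] = 0 for all i. -/
theorem stmt_9 {d n : ℕ} (hd : 0 < d) (hn : 0 < n)
    (η : Fin n → ℝ) (ρ : Fin n → Matrix (Fin d) (Fin d) ℂ)
    (hη : ∀ i, 0 < η i) (hηsum : ∑ i, η i = 1)
    (hρ : ∀ i, (ρ i).PosSemidef) (hρtr : ∀ i, (ρ i).trace = 1)
    (ρ₀ : Matrix (Fin d) (Fin d) ℂ) (hρ₀ : ρ₀ = ∑ i, (η i : ℂ) • ρ i)
    (C : Fin n → ℝ)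
    (hC : ∀ i, IsLeast { q : ℝ | ((q : ℂ) • ρ₀ - (η i : ℂ) • ρ i).PosSemidef } (C i)) (p : ℝ)
    (hat :
      IsGreatest { r : ℝ | ∃ M : Option (Fin n) → Matrix (Fin d) (Fin d) ℂ,
          (∀ j, (M j).PosSemidef) ∧ ∑ j, M j = 1 ∧
          (∀ i, (((C i : ℂ) • ρ₀ - (η i : ℂ) • ρ i) * M (some i)).trace = 0) ∧
          r = ∑ i, η i * (ρ i * M (some i)).trace.re } p ∧
      IsLeast { t : ℝ | ∃ H : Matrix (Fin d) (Fin d) ℂ, H.PosSemidef ∧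
          (∀ i, ∀ F : Matrix (Fin d) (Fin d) ℂ, F.PosSemidef →
            (((C i : ℂ) • ρ₀ - (η i : ℂ) • ρ i) * F).trace = 0 →
            0 ≤ ((H - (η i : ℂ) • ρ i) * F).trace.re) ∧
          t = H.trace.re } p)
    (M : Option (Fin n) → Matrix (Fin d) (Fin d) ℂ)
    (hMpsd : ∀ j, (M j).PosSemidef) (hMsum : ∑ j, M j = 1)
    (hMmc : ∀ i, (((C i : ℂ) • ρ₀ - (η i : ℂ) • ρ i) * M (some i)).trace = 0)
    (H : Matrix (Fin d) (Fin d) ℂ) (hH : H.PosSemidef)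
    (hHfeas : ∀ i, ∀ F : Matrix (Fin d) (Fin d) ℂ, F.PosSemidef →
      (((C i : ℂ) • ρ₀ - (η i : ℂ) • ρ i) * F).trace = 0 →
      0 ≤ ((H - (η i : ℂ) • ρ i) * F).trace.re) :
    ((∑ i, η i * (ρ i * M (some i)).trace.re) = p ∧ H.trace.re = p) ↔
      ((M none * H).trace = 0 ∧
        ∀ i, (M (some i) * (H - (η i : ℂ) • ρ i)).trace = 0) := by

  set v := ∑ i, η i * (ρ i * M (some i)).trace.re with hv
  have hHherm : ∀ i, (H - (η i : ℂ) • ρ i).IsHermitian := by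
    intro i
    refine hH.1.sub ?_
    rw [Matrix.IsHermitian, Matrix.conjTranspose_smul, (hρ i).1.eq]
    simp [Complex.star_def, Complex.conj_ofReal]
  have expand : ∀ i, (M (some i) * (H - (η i : ℂ) • ρ i)).trace
      = (M (some i) * H).trace - (η i : ℂ) * (ρ i * M (some i)).trace := by
    intro i
    rw [Matrix.mul_sub, Matrix.trace_sub, Matrix.mul_smul, Matrix.trace_smul, smul_eq_mul,
      Matrix.trace_mul_comm (M (some i)) (ρ i)]
  have hsum : H.trace = (M none * H).trace + ∑ i, (M (some i) * H).trace := by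
    conv_lhs => rw [← one_mul H, ← hMsum]
    rw [Matrix.sum_mul, Matrix.trace_sum, Fintype.sum_option]
  have key : H.trace = (M none * H).trace
      + ∑ i, (M (some i) * (H - (η i : ℂ) • ρ i)).trace
      + ∑ i, (η i : ℂ) * (ρ i * M (some i)).trace := by
    rw [hsum]
    simp only [expand, Finset.sum_sub_distrib]
    ring
  have key_re : H.trace.re = (M none * H).trace.re
      + (∑ i, (M (some i) * (H - (η i : ℂ) • ρ i)).trace.re) + v := by
    have := congrArg Complex.re key
    simpa [Complex.re_sum, Complex.add_re, Complex.mul_re, hv] using this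
  have h0 : 0 ≤ (M none * H).trace := psd_mul_trace_nonneg (hMpsd none) hH
  have hti_real : ∀ i, (((M (some i) * (H - (η i : ℂ) • ρ i)).trace.re : ℂ))
      = (M (some i) * (H - (η i : ℂ) • ρ i)).trace := fun i =>
    herm_mul_trace_real (hMpsd (some i)).1 (hHherm i)
  have hti_nonneg : ∀ i, 0 ≤ (M (some i) * (H - (η i : ℂ) • ρ i)).trace.re := by
    intro i
    rw [Matrix.trace_mul_comm]
    exact hHfeas i (M (some i)) (hMpsd (some i)) (hMmc i)
  constructor
  · rintro ⟨hvp, hHp⟩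
    have hz : (M none * H).trace.re
        + ∑ i, (M (some i) * (H - (η i : ℂ) • ρ i)).trace.re = 0 := by
      linarith [key_re, hvp, hHp]
    have h0re : 0 ≤ (M none * H).trace.re := (Complex.nonneg_iff.mp h0).1
    have hsnn : 0 ≤ ∑ i, (M (some i) * (H - (η i : ℂ) • ρ i)).trace.re :=
      Finset.sum_nonneg fun i _ => hti_nonneg i
    have h0z : (M none * H).trace.re = 0 := by linarith
    have hsz : ∑ i, (M (some i) * (H - (η i : ℂ) • ρ i)).trace.re = 0 := by linarith
    constructor
    · have him : 0 = (M none * H).trace.im := (Complex.nonneg_iff.mp h0).2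
      exact Complex.ext h0z him.symm
    · intro i
      have := (Finset.sum_eq_zero_iff_of_nonneg (fun i _ => hti_nonneg i)).mp hsz i
        (Finset.mem_univ i)
      rw [← hti_real i, this, Complex.ofReal_zero]
  · rintro ⟨hz0, hzi⟩
    have heq : H.trace.re = v := by
      rw [key_re, hz0]
      simp only [hzi]
      simp
    have h1 : v ≤ p := hat.1.2 ⟨M, hMpsd, hMsum, hMmc, rfl⟩
    have h2 : p ≤ H.trace.re := hat.2.2 ⟨H, hH, hHfeas, rfl⟩
    constructor <;> linarith
end

section
/- If for each l = 1,…,L the measurement {M_?^l} ∪ {M_i^l}_{i=1}^{n_l} is a maximum-confidence measurement of the ensemble E^l, then the product measurement with conclusive operators M_c⃗ = ⊗_{l=1}^L M_{c_l}^l (and M_? = 1 − Σ_c⃗ M_c⃗) is a maximum-confidence measurement of the product ensemble E = ⊗_l E^l. -/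
open Matrix BigOperators
open scoped ComplexOrder

/-- L-fold tensor (Kronecker) product of square complex matrices, realized on the
index type ∀ l, Fin (d l). -/
def tens {L : ℕ} {d : Fin L → ℕ}
    (X : ∀ l, Matrix (Fin (d l)) (Fin (d l)) ℂ) :
    Matrix (∀ l, Fin (d l)) (∀ l, Fin (d l)) ℂ :=
  Matrix.of fun a b => ∏ l, X l (a l) (b l)

section aux
variable {L : ℕ} {d : Fin L → ℕ}

lemma tens_mul (X Y : ∀ l, Matrix (Fin (d l)) (Fin (d l)) ℂ) :
    tens (fun l => X l * Y l) = tens X * tens Y := by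
  ext a b
  simp only [tens, Matrix.of_apply, Matrix.mul_apply]
  rw [Finset.prod_univ_sum, Fintype.piFinset_univ]
  exact Finset.sum_congr rfl fun x _ => Finset.prod_mul_distrib

lemma tens_one : tens (fun l : Fin L => (1 : Matrix (Fin (d l)) (Fin (d l)) ℂ)) = 1 := by
  ext a b
  simp only [tens, Matrix.of_apply, Matrix.one_apply]
  rw [Finset.prod_boole]
  simp [funext_iff]

lemma tens_conjTranspose (X : ∀ l, Matrix (Fin (d l)) (Fin (d l)) ℂ) :
    (tens X)ᴴ = tens (fun l => (X l)ᴴ) := by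
  ext a b
  simp [tens, Matrix.conjTranspose_apply, map_prod]

lemma tens_trace (X : ∀ l, Matrix (Fin (d l)) (Fin (d l)) ℂ) :
    (tens X).trace = ∏ l, (X l).trace := by
  simp only [Matrix.trace, Matrix.diag, tens, Matrix.of_apply]
  rw [Finset.prod_univ_sum, Fintype.piFinset_univ]

open scoped MatrixOrder in
lemma tens_psd {X : ∀ l, Matrix (Fin (d l)) (Fin (d l)) ℂ}
    (h : ∀ l, (X l).PosSemidef) : (tens X).PosSemidef := by
  set B : ∀ l, Matrix (Fin (d l)) (Fin (d l)) ℂ := fun l => CFC.sqrt (X l) with hB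
  have h1 : tens X = (tens B)ᴴ * tens B := by
    rw [tens_conjTranspose, ← tens_mul]
    have he : (fun l => (B l)ᴴ * B l) = X := funext fun l => by
      rw [(show (B l)ᴴ = B l from (CFC.sqrt_nonneg (X l)).isSelfAdjoint.star_eq),
        CFC.sqrt_mul_sqrt_self (X l) (Matrix.nonneg_iff_posSemidef.mpr (h l))]
    rw [he]
  rw [h1]
  exact Matrix.posSemidef_conjTranspose_mul_self _

lemma tens_sum {nn : Fin L → ℕ} (A : ∀ l, Fin (nn l) → Matrix (Fin (d l)) (Fin (d l)) ℂ) :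
    ∑ c : ∀ l, Fin (nn l), tens (fun l => A l (c l)) = tens (fun l => ∑ i, A l i) := by
  ext a b
  simp only [Matrix.sum_apply, tens, Matrix.of_apply]
  rw [Finset.prod_univ_sum, Fintype.piFinset_univ]

set_option maxHeartbeats 1000000 in
lemma one_sub_tens_psd (S : ∀ l : Fin L, Matrix (Fin (d l)) (Fin (d l)) ℂ)
    (hpsd : ∀ l, (S l).PosSemidef) (hsub : ∀ l, ((1 : Matrix _ _ ℂ) - S l).PosSemidef) :
    ((1 : Matrix _ _ ℂ) - tens S).PosSemidef := by
  classical
  set T : ℕ → Matrix (∀ l, Fin (d l)) (∀ l, Fin (d l)) ℂ :=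
    fun k => tens (fun l => if (l : ℕ) < k then S l else 1) with hT
  have hT0 : T 0 = 1 := by
    simp only [hT, Nat.not_lt_zero, if_false]
    exact tens_one
  have hTL : T L = tens S := by
    have he : (fun l : Fin L => if (l : ℕ) < L then S l else 1) = S :=
      funext fun l => by simp [l.isLt]
    simp only [hT, he]
  have key : ∀ k < L, T k - T (k + 1) =
      tens (fun l => if (l : ℕ) < k then S l
        else if (l : ℕ) = k then (1 : Matrix _ _ ℂ) - S l else 1) := by
    intro k hk
    set k0 : Fin L := ⟨k, hk⟩ with hk0
    ext a b
    simp only [Matrix.sub_apply, hT, tens, Matrix.of_apply]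
    rw [← Finset.mul_prod_erase Finset.univ _ (Finset.mem_univ k0),
        ← Finset.mul_prod_erase Finset.univ _ (Finset.mem_univ k0),
        ← Finset.mul_prod_erase Finset.univ
          (fun l : Fin L => (if (l : ℕ) < k then S l
            else if (l : ℕ) = k then (1 : Matrix _ _ ℂ) - S l else 1) (a l) (b l))
          (Finset.mem_univ k0)]
    have hP : ∀ l ∈ Finset.univ.erase k0,
        (if (l : ℕ) < k + 1 then S l else 1) (a l) (b l)
          = (if (l : ℕ) < k then S l else 1) (a l) (b l) := by
      intro l hl
      have hne : (l : ℕ) ≠ k := by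
        intro h
        exact (Finset.mem_erase.mp hl).1 (Fin.ext h)
      by_cases h : (l : ℕ) < k
      · simp [h, Nat.lt_succ_of_lt h]
      · have h2 : ¬ (l : ℕ) < k + 1 := by
          intro h2
          rcases Nat.lt_succ_iff_lt_or_eq.mp h2 with h3 | h3
          · exact h h3
          · exact hne h3
        simp [h, h2]
    have hP2 : ∀ l ∈ Finset.univ.erase k0,
        (if (l : ℕ) < k then S l
            else if (l : ℕ) = k then (1 : Matrix _ _ ℂ) - S l else 1) (a l) (b l)
          = (if (l : ℕ) < k then S l else 1) (a l) (b l) := by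
      intro l hl
      have hne : (l : ℕ) ≠ k := by
        intro h
        exact (Finset.mem_erase.mp hl).1 (Fin.ext h)
      by_cases h : (l : ℕ) < k <;> simp [h, hne]
    rw [Finset.prod_congr rfl hP, Finset.prod_congr rfl hP2]
    have e1 : ((k0 : ℕ) < k) = False := by simp [hk0]
    have e2 : ((k0 : ℕ) < k + 1) = True := by simp [hk0]
    have e3 : ((k0 : ℕ) = k) = True := by simp [hk0]
    simp only [e1, e2, e3, if_true, if_false]
    rw [Matrix.sub_apply]
    ring
  have hsumT : (1 : Matrix _ _ ℂ) - tens S = ∑ k ∈ Finset.range L, (T k - T (k + 1)) := by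
    rw [Finset.sum_range_sub' T L, hT0, hTL]
  rw [hsumT]
  apply Finset.sum_induction _ _ (fun A B hA hB => hA.add hB) Matrix.PosSemidef.zero
  intro k hk
  rw [key k (Finset.mem_range.mp hk)]
  apply tens_psd
  intro l
  by_cases h1 : (l : ℕ) < k
  · simpa [h1] using hpsd l
  · by_cases h2 : (l : ℕ) = k
    · simpa [h1, h2] using hsub l
    · simpa [h1, h2] using Matrix.PosSemidef.one

end aux

/-- if each M^l is a maximum-confidence measurement of E^l, then the
product measurement with conclusive operators ⊗_l M_{c_l}^l (and inconclusive operator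
1 − Σ_c⃗ ⊗_l M_{c_l}^l) is a maximum-confidence measurement of the product ensemble. -/
theorem stmt_14 {L : ℕ} (hL : 0 < L) {d n : Fin L → ℕ}
    (hd : ∀ l, 0 < d l) (hn : ∀ l, 0 < n l)
    (η : ∀ l, Fin (n l) → ℝ)
    (ρ : ∀ l, Fin (n l) → Matrix (Fin (d l)) (Fin (d l)) ℂ)
    (hη : ∀ l i, 0 < η l i) (hηsum : ∀ l, ∑ i, η l i = 1)
    (hρ : ∀ l i, (ρ l i).PosSemidef) (hρtr : ∀ l i, (ρ l i).trace = 1)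
    (ρ₀ : ∀ l, Matrix (Fin (d l)) (Fin (d l)) ℂ)
    (hρ₀ : ∀ l, ρ₀ l = ∑ i, (η l i : ℂ) • ρ l i)
    (C : ∀ l, Fin (n l) → ℝ)
    (hC : ∀ l i, IsLeast { q : ℝ | ((q : ℂ) • ρ₀ l - (η l i : ℂ) • ρ l i).PosSemidef } (C l i))
    (M : ∀ l, Option (Fin (n l)) → Matrix (Fin (d l)) (Fin (d l)) ℂ)
    (hMpsd : ∀ l j, (M l j).PosSemidef) (hMsum : ∀ l, ∑ j, M l j = 1)
    (hMmc : ∀ l i, (((C l i : ℂ) • ρ₀ l - (η l i : ℂ) • ρ l i) * M l (some i)).trace = 0) :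
    (∀ c : ∀ l, Fin (n l), (tens (fun l => M l (some (c l)))).PosSemidef) ∧
    (1 - ∑ c : ∀ l, Fin (n l), tens (fun l => M l (some (c l)))).PosSemidef ∧
    (∀ c : ∀ l, Fin (n l),
      ((((∏ l, C l (c l) : ℝ) : ℂ) • tens ρ₀ -
          ((∏ l, η l (c l) : ℝ) : ℂ) • tens (fun l => ρ l (c l))) *
        tens (fun l => M l (some (c l)))).trace = 0) := by
  refine ⟨fun c => tens_psd fun l => hMpsd l (some (c l)), ?_, ?_⟩
  · rw [tens_sum (fun l i => M l (some i))]
    have hS1 : ∀ l, (∑ i, M l (some i)) = 1 - M l none := by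
      intro l
      have h := hMsum l
      rw [Fintype.sum_option] at h
      linear_combination (norm := module) h
    apply one_sub_tens_psd
    · intro l
      exact Finset.sum_induction _ _ (fun A B hA hB => hA.add hB) Matrix.PosSemidef.zero
        (fun i _ => hMpsd l (some i))
    · intro l
      rw [hS1 l]
      simpa using hMpsd l none
  · intro c
    have hfac : ∀ l, (C l (c l) : ℂ) * (ρ₀ l * M l (some (c l))).trace
        = (η l (c l) : ℂ) * (ρ l (c l) * M l (some (c l))).trace := by
      intro l
      have h := hMmc l (c l)
      rw [Matrix.sub_mul, Matrix.smul_mul, Matrix.smul_mul, Matrix.trace_sub,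
        Matrix.trace_smul, Matrix.trace_smul, sub_eq_zero] at h
      simpa [smul_eq_mul] using h
    rw [Matrix.sub_mul, Matrix.smul_mul, Matrix.smul_mul, Matrix.trace_sub,
      Matrix.trace_smul, Matrix.trace_smul, ← tens_mul, ← tens_mul, tens_trace, tens_trace,
      smul_eq_mul, smul_eq_mul, sub_eq_zero]
    push_cast
    rw [← Finset.prod_mul_distrib, ← Finset.prod_mul_distrib]
    exact Finset.prod_congr rfl fun l _ => hfac l
end
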